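/- For every choice of signs θ_{i,j} = ±1 (1 ≤ i,j ≤ n), the function x(s,t) = Σ_{i,j=1}^n θ_{i,j} r_i(s) r_j(t) satisfies ‖x‖_{L^∞([0,1]²)} ≥ (1/√2)·n^{3/2}. -/

import Mathlib

open MeasureTheory Real Set

/-- Rademacher function `r_k(t) = sign (sin (2^(k-1) π t))`. -/
noncomputable def rad (k : ℕ) (t : ℝ) : ℝ :=
  Real.sign (Real.sin (2 ^ (k - 1) * Real.pi * t))

/-- Lebesgue measure on the unit square `[0,1]²`. -/
noncomputable def μsq : Measure (ℝ × ℝ) :=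
  (volume.restrict (Set.Icc (0:ℝ) 1)).prod (volume.restrict (Set.Icc (0:ℝ) 1))

open Finset

/-- sign pattern from binary digits -/
def pat (v p : ℕ) : ℝ := if (v / 2^p) % 2 = 0 then 1 else -1

lemma pat_cases (v p : ℕ) : pat v p = 1 ∨ pat v p = -1 := by
  unfold pat; split <;> simp

lemma pat_of_lt {v p : ℕ} (h : v < 2^p) : pat v p = 1 := by
  unfold pat; rw [Nat.div_eq_of_lt h]; simp

lemma pat_add_pow {v m p : ℕ} (h : p < m) : pat (v + 2^m) p = pat v p := by
  unfold pat
  have h2 : 2^m = 2^(m-p-1) * 2 * 2^p := by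
    rw [mul_assoc, ← pow_succ']
    rw [← pow_add]
    congr 1
    omega
  rw [h2, Nat.add_mul_div_right _ _ (Nat.two_pow_pos p),
    Nat.add_mul_mod_self_right]

lemma pat_pow_self (v m : ℕ) (h : v < 2^m) : pat (v + 2^m) m = -1 := by
  unfold pat
  rw [Nat.add_div_right _ (Nat.two_pow_pos m), Nat.div_eq_of_lt h]
  simp

/-- realization of sign patterns -/
lemma pat_realize (m : ℕ) (d : ℕ → ℝ) (hd : ∀ p, d p = 1 ∨ d p = -1) :
    ∃ w, w < 2^m ∧ (∀ p, p < m → pat w p = d p) ∧ (∀ p, m ≤ p → pat w p = 1) := by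
  induction m with
  | zero => exact ⟨0, by norm_num, fun p hp => absurd hp (by omega),
      fun p _ => pat_of_lt (Nat.two_pow_pos p)⟩
  | succ m ih =>
    obtain ⟨w, hw, h1, h2⟩ := ih
    rcases hd m with hdm | hdm
    · refine ⟨w, lt_trans hw (by exact Nat.pow_lt_pow_succ (by norm_num)), fun p hp => ?_,
        fun p hp => h2 p (by omega)⟩
      rcases Nat.lt_or_ge p m with h | h
      · exact h1 p h
      · have : p = m := by omega
        subst this
        rw [h2 p le_rfl, hdm]
    · refine ⟨w + 2^m, by omega, fun p hp => ?_, fun p hp => ?_⟩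
      · rcases Nat.lt_or_ge p m with h | h
        · rw [pat_add_pow h]; exact h1 p h
        · have : p = m := by omega
          subst this
          rw [pat_pow_self _ _ hw, hdm]
      · exact pat_of_lt (by calc w + 2^m < 2^m + 2^m := by omega
                                _ = 2^(m+1) := by ring
                                _ ≤ 2^p := Nat.pow_le_pow_right (by norm_num) hp)

/-- rad is constant on dyadic intervals -/
lemma rad_eq_pat {n i v : ℕ} (hi1 : 1 ≤ i) (hin : i ≤ n) (hv : v < 2^(n-1))
    {t : ℝ} (ht : t ∈ Set.Ioo ((v : ℝ)/2^(n-1)) ((v+1 : ℝ)/2^(n-1))) :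
    rad i t = pat v (n - i) := by
  set p := n - i with hp
  set q := v / 2^p with hq
  have hpow : (2:ℝ)^(n-1) = 2^(i-1) * 2^p := by
    rw [← pow_add]; congr 1; omega
  have hppos : (0:ℝ) < 2^p := by positivity
  have hipos : (0:ℝ) < 2^(i-1) := by positivity
  set u := 2^(i-1) * t with hu
  have key1 : (v:ℝ)/2^p = 2^(i-1) * ((v:ℝ)/2^(n-1)) := by
    rw [hpow]; field_simp
  have key2 : ((v:ℝ)+1)/2^p = 2^(i-1) * (((v:ℝ)+1)/2^(n-1)) := by
    rw [hpow]; field_simp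
  have hql : (q:ℝ) * 2^p ≤ v := by
    exact_mod_cast Nat.mul_le_of_le_div _ _ _ le_rfl
  have hqlt : (q:ℝ) < u := by
    calc (q:ℝ) ≤ (v:ℝ)/2^p := by rw [le_div_iff₀ hppos]; exact hql
    _ = 2^(i-1) * ((v:ℝ)/2^(n-1)) := key1
    _ < u := mul_lt_mul_of_pos_left ht.1 hipos
  have hvq : v < (q+1) * 2^p := by
    rw [hq]
    have h1 := Nat.div_add_mod v (2^p)
    have h2 := Nat.mod_lt v (show 0 < 2^p from Nat.two_pow_pos p)
    have h3 : (v / 2^p + 1) * 2^p = 2^p * (v / 2^p) + 2^p := by ring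
    omega
  have hult : u < (q:ℝ) + 1 := by
    calc u < 2^(i-1) * (((v:ℝ)+1)/2^(n-1)) := mul_lt_mul_of_pos_left ht.2 hipos
    _ = ((v:ℝ)+1)/2^p := key2.symm
    _ ≤ (q:ℝ)+1 := by
        rw [div_le_iff₀ hppos]
        have : (v:ℝ) + 1 ≤ ((q:ℝ)+1) * 2^p := by exact_mod_cast Nat.succ_le_of_lt hvq
        exact this
  -- now compute the sine
  have harg : 2 ^ (i - 1) * Real.pi * t = Real.pi * (u - q) + (q:ℤ) * Real.pi := by
    push_cast; ring
  have hsin : Real.sin (2 ^ (i - 1) * Real.pi * t) = (-1)^q * Real.sin (Real.pi * (u - q)) := by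
    rw [harg, Real.sin_add_int_mul_pi]
    norm_num [zpow_natCast]
  have hspos : 0 < Real.sin (Real.pi * (u - q)) := by
    apply Real.sin_pos_of_pos_of_lt_pi
    · have : (0:ℝ) < u - q := by linarith
      positivity
    · nlinarith [Real.pi_pos]
  unfold rad pat
  rw [hsin, ← hq]
  rcases Nat.even_or_odd q with he | ho
  · rw [he.neg_one_pow, one_mul, Real.sign_of_pos hspos, if_pos (Nat.even_iff.1 he)]
  · have ho2 := Nat.odd_iff.1 ho
    rw [ho.neg_one_pow, neg_one_mul, Real.sign_of_neg (by linarith), if_neg (by omega)]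

lemma sum_split (m : ℕ) (f : ℕ → ℝ) :
    ∑ v ∈ range (2^(m+1)), f v = ∑ v ∈ range (2^m), f v + ∑ v ∈ range (2^m), f (v + 2^m) := by
  rw [show 2^(m+1) = 2^m + 2^m by rw [pow_succ]; ring, Finset.sum_range_add]
  simp [add_comm]

/-- absorb coefficient signs -/
lemma sign_absorb (m : ℕ) (ε : ℕ → ℝ) (hε : ∀ p, ε p = 1 ∨ ε p = -1) (c : ℝ) :
    ∑ v ∈ range (2^m), |c + ∑ p ∈ range m, ε p * pat v p|
      = ∑ v ∈ range (2^m), |c + ∑ p ∈ range m, pat v p| := by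
  induction m generalizing c with
  | zero => simp
  | succ m ih =>
    rw [sum_split, sum_split]
    have e1 : ∀ v ∈ range (2^m), |c + ∑ p ∈ range (m+1), ε p * pat v p|
        = |(c + ε m) + ∑ p ∈ range m, ε p * pat v p| := by
      intro v hv
      rw [Finset.sum_range_succ, pat_of_lt (mem_range.1 hv)]
      congr 1; ring
    have e2 : ∀ v ∈ range (2^m), |c + ∑ p ∈ range (m+1), ε p * pat (v + 2^m) p|
        = |(c - ε m) + ∑ p ∈ range m, ε p * pat v p| := by
      intro v hv
      rw [Finset.sum_range_succ, pat_pow_self _ _ (mem_range.1 hv),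
        Finset.sum_congr rfl (fun p hp => by rw [pat_add_pow (mem_range.1 hp)])]
      congr 1; ring
    have e3 : ∀ v ∈ range (2^m), |c + ∑ p ∈ range (m+1), pat v p|
        = |(c + 1) + ∑ p ∈ range m, pat v p| := by
      intro v hv
      rw [Finset.sum_range_succ, pat_of_lt (mem_range.1 hv)]
      congr 1; ring
    have e4 : ∀ v ∈ range (2^m), |c + ∑ p ∈ range (m+1), pat (v + 2^m) p|
        = |(c - 1) + ∑ p ∈ range m, pat v p| := by
      intro v hv
      rw [Finset.sum_range_succ, pat_pow_self _ _ (mem_range.1 hv),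
        Finset.sum_congr rfl (fun p hp => by rw [pat_add_pow (mem_range.1 hp)])]
      congr 1; ring
    rw [Finset.sum_congr rfl e1, Finset.sum_congr rfl e2, Finset.sum_congr rfl e3,
      Finset.sum_congr rfl e4, ih (c + ε m), ih (c - ε m)]
    rcases hε m with h | h
    · rw [h]
    · rw [h]
      rw [show c + -1 = c - 1 by ring, show c - -1 = c + 1 by ring, add_comm]

/-- Pascal rearrangement -/
lemma pascal_rearrange (F : ℝ → ℝ) (m : ℕ) :
    ∑ k ∈ range (m+2), ((m+1).choose k : ℝ) * F ((m:ℝ) + 1 - 2*k)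
      = ∑ k ∈ range (m+1), (m.choose k : ℝ) * F ((m:ℝ) - 2*k + 1)
        + ∑ k ∈ range (m+1), (m.choose k : ℝ) * F ((m:ℝ) - 2*k - 1) := by
  have harg : ∀ k : ℕ, (m:ℝ) + 1 - 2*((k+1 : ℕ):ℝ) = (m:ℝ) - 2*(k:ℝ) - 1 := by
    intro k; push_cast; ring
  have harg2 : ∀ k : ℕ, (m:ℝ) - 2*((k+1 : ℕ):ℝ) + 1 = (m:ℝ) - 2*(k:ℝ) - 1 := by
    intro k; push_cast; ring
  have step1 : ∑ k ∈ range (m+2), ((m+1).choose k : ℝ) * F ((m:ℝ) + 1 - 2*k)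
      = ∑ k ∈ range (m+1), (m.choose k : ℝ) * F ((m:ℝ) - 2*k - 1)
        + ∑ k ∈ range (m+1), (m.choose (k+1) : ℝ) * F ((m:ℝ) - 2*k - 1)
        + F ((m:ℝ) + 1) := by
    rw [Finset.sum_range_succ']
    have : ∀ k ∈ range (m+1), ((m+1).choose (k+1) : ℝ) * F ((m:ℝ) + 1 - 2*((k+1:ℕ):ℝ))
        = (m.choose k : ℝ) * F ((m:ℝ) - 2*k - 1) + (m.choose (k+1) : ℝ) * F ((m:ℝ) - 2*k - 1) := by
      intro k hk
      rw [harg k, Nat.choose_succ_succ]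
      push_cast; ring
    rw [Finset.sum_congr rfl this, Finset.sum_add_distrib]
    norm_num
  have step2 : ∑ k ∈ range (m+1), (m.choose k : ℝ) * F ((m:ℝ) - 2*k + 1)
      = ∑ k ∈ range (m+1), (m.choose (k+1) : ℝ) * F ((m:ℝ) - 2*k - 1) + F ((m:ℝ) + 1) := by
    rw [Finset.sum_range_succ']
    have : ∀ k ∈ range m, (m.choose (k+1) : ℝ) * F ((m:ℝ) - 2*((k+1:ℕ):ℝ) + 1)
        = (m.choose (k+1) : ℝ) * F ((m:ℝ) - 2*k - 1) := by
      intro k hk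
      rw [harg2 k]
    rw [Finset.sum_congr rfl this]
    rw [Finset.sum_range_succ (fun k => (m.choose (k+1) : ℝ) * F ((m:ℝ) - 2*k - 1)) m]
    rw [Nat.choose_succ_self]
    norm_num
  rw [step1, step2]
  ring

/-- grouping into binomial sums -/
lemma group_binom (m : ℕ) (F : ℝ → ℝ) :
    ∑ v ∈ range (2^m), F (∑ p ∈ range m, pat v p)
      = ∑ k ∈ range (m+1), (m.choose k : ℝ) * F ((m:ℝ) - 2*k) := by
  induction m generalizing F with
  | zero => simp
  | succ m ih =>
    rw [sum_split]
    have e3 : ∀ v ∈ range (2^m), F (∑ p ∈ range (m+1), pat v p)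
        = F (∑ p ∈ range m, pat v p + 1) := by
      intro v hv
      rw [Finset.sum_range_succ, pat_of_lt (mem_range.1 hv)]
    have e4 : ∀ v ∈ range (2^m), F (∑ p ∈ range (m+1), pat (v + 2^m) p)
        = F (∑ p ∈ range m, pat v p + -1) := by
      intro v hv
      rw [Finset.sum_range_succ, pat_pow_self _ _ (mem_range.1 hv),
        Finset.sum_congr rfl (fun p hp => by rw [pat_add_pow (mem_range.1 hp)])]
    rw [Finset.sum_congr rfl e3, Finset.sum_congr rfl e4,
      ih (fun x => F (x + 1)), ih (fun x => F (x + -1))]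
    push_cast
    rw [pascal_rearrange F m]
    congr 1

lemma choose_even_id (r : ℕ) : (r+r+1+1) * Nat.choose (r+r+1) r = 2*((r+r+1) * Nat.choose (r+r) r) := by
  rcases Nat.eq_zero_or_pos r with rfl | hr
  · norm_num
  · have h1 : Nat.choose (r+r+1) r = Nat.choose (r+r) (r-1) + Nat.choose (r+r) r := by
      have := Nat.choose_succ_succ (r+r) (r-1)
      simp only [Nat.succ_eq_add_one] at this
      rw [show r - 1 + 1 = r by omega] at this
      exact this
    have h2 : Nat.choose (r+r) r * r = Nat.choose (r+r) (r-1) * (r+1) := by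
      have := Nat.choose_succ_right_eq (r+r) (r-1)
      rw [show r - 1 + 1 = r by omega, show r+r - (r-1) = r+1 by omega] at this
      exact this
    nlinarith [h1, h2]

lemma choose_odd_id (r : ℕ) : Nat.choose (2*r+2) (r+1) = 2 * Nat.choose (2*r+1) r := by
  have h1 := Nat.choose_succ_succ (2*r+1) r
  simp only [Nat.succ_eq_add_one] at h1
  rw [show 2*r+1+1 = 2*r+2 by ring] at h1
  have h2 : Nat.choose (2*r+1) (r+1) = Nat.choose (2*r+1) r := by
    rw [← Nat.choose_symm (by omega : r+1 ≤ 2*r+1), show 2*r+1 - (r+1) = r by omega]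
  omega

lemma choose_symm_odd (r : ℕ) : Nat.choose (2*r+1) (r+1) = Nat.choose (2*r+1) r := by
  rw [← Nat.choose_symm (by omega : r+1 ≤ 2*r+1), show 2*r+1 - (r+1) = r by omega]

/-- the binomial abs identity -/
lemma binom_abs_identity (m : ℕ) :
    ∑ k ∈ range (m+1), (m.choose k : ℝ) * |(m:ℝ) + 1 - 2*k|
      = ((m+1) * m.choose (m/2) : ℕ) := by
  induction m with
  | zero => simp
  | succ m ih =>
    have hP := pascal_rearrange (fun x => |x + 1|) m
    have lhs_eq : ∑ k ∈ range (m+1+1), ((m+1).choose k : ℝ) * |((m+1:ℕ):ℝ) + 1 - 2*k|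
        = ∑ k ∈ range (m+2), ((m+1).choose k : ℝ) * |(m:ℝ) + 1 - 2*k + 1| := by
      apply Finset.sum_congr rfl
      intro k hk
      congr 1
      push_cast
      ring_nf
    rw [lhs_eq, hP]
    have key : ∀ k ∈ range (m+1),
        (m.choose k:ℝ)*|(m:ℝ)-2*k+1+1| + (m.choose k:ℝ)*|(m:ℝ)-2*k-1+1|
        = 2*((m.choose k:ℝ)*|(m:ℝ)+1-2*k|) + (if 2*k = m+1 then 2*(m.choose k:ℝ) else 0) := by
      intro k hk
      have hc : ((2*k:ℕ):ℝ) = 2*(k:ℝ) := by push_cast; ring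
      rcases (by omega : 2*k ≤ m ∨ 2*k = m+1 ∨ m+2 ≤ 2*k) with h|h|h
      · have ha : (0:ℝ) ≤ (m:ℝ)-2*k := by
          have := (Nat.cast_le (α := ℝ)).2 h
          rw [hc] at this; linarith
        rw [if_neg (by omega), abs_of_nonneg (by linarith), abs_of_nonneg (by linarith),
          abs_of_nonneg (by linarith)]
        ring
      · have ha : (m:ℝ)-2*k = -1 := by
          have : ((2*k:ℕ):ℝ) = ((m+1:ℕ):ℝ) := by rw [h]
          rw [hc] at this; push_cast at this; linarith
        rw [if_pos h, show (m:ℝ)-2*k+1+1 = ((m:ℝ)-2*k)+2 by ring,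
          show (m:ℝ)-2*k-1+1 = (m:ℝ)-2*k by ring,
          show (m:ℝ)+1-2*k = ((m:ℝ)-2*k)+1 by ring, ha]
        norm_num
        ring
      · have ha : (m:ℝ)-2*k ≤ -2 := by
          have := (Nat.cast_le (α := ℝ)).2 h
          rw [hc] at this; push_cast at this; linarith
        rw [if_neg (by omega), abs_of_nonpos (by linarith), abs_of_nonpos (by linarith),
          abs_of_nonpos (by linarith)]
        ring
    rw [← Finset.sum_add_distrib, Finset.sum_congr rfl key, Finset.sum_add_distrib,
      ← Finset.mul_sum, ih]
    have hite : ∑ k ∈ range (m+1), (if 2*k = m+1 then 2*(m.choose k:ℝ) else 0)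
        = if m % 2 = 1 then 2*(m.choose ((m+1)/2):ℝ) else 0 := by
      rcases Nat.even_or_odd m with he | ho
      · rw [if_neg (by obtain ⟨r, rfl⟩ := he; omega : ¬ m % 2 = 1)]
        apply Finset.sum_eq_zero
        intro k hk
        rw [if_neg (by obtain ⟨r, rfl⟩ := he; omega)]
      · have hm2 := Nat.odd_iff.1 ho
        rw [if_pos hm2]
        rw [Finset.sum_eq_single ((m+1)/2)]
        · rw [if_pos (by omega)]
        · intro k hk hne
          rw [if_neg (by omega)]
        · intro h
          exact absurd (Finset.mem_range.2 (by omega)) h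
    rw [hite]
    rcases Nat.even_or_odd m with he | ho
    · obtain ⟨r, rfl⟩ := he
      rw [if_neg (by omega : ¬ (r+r) % 2 = 1), add_zero,
        show (r+r)/2 = r from by omega, show (r+r+1)/2 = r from by omega]
      have := choose_even_id r
      push_cast [this]
      ring
    · obtain ⟨r, rfl⟩ := ho
      rw [if_pos (by omega : (2*r+1) % 2 = 1),
        show (2*r+1)/2 = r from by omega, show (2*r+1+1)/2 = r+1 from by omega]
      have hA := choose_odd_id r
      have hB := choose_symm_odd r
      push_cast [show 2*r+1+1 = 2*r+2 from rfl, hA, hB]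
      ring

lemma khinchin_sum (m : ℕ) (c : ℝ) (hc : c = 1 ∨ c = -1) (ε : ℕ → ℝ)
    (hε : ∀ p, ε p = 1 ∨ ε p = -1) :
    ∑ v ∈ range (2^m), |c + ∑ p ∈ range m, ε p * pat v p|
      = ((m+1) * m.choose (m/2) : ℕ) := by
  have main : ∀ (ε : ℕ → ℝ), (∀ p, ε p = 1 ∨ ε p = -1) →
      ∑ v ∈ range (2^m), |1 + ∑ p ∈ range m, ε p * pat v p|
        = ((m+1) * m.choose (m/2) : ℕ) := by
    intro ε hε
    rw [sign_absorb m ε hε 1]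
    have hg := group_binom m (fun x => |1 + x|)
    rw [hg, ← binom_abs_identity m]
    apply Finset.sum_congr rfl
    intro k hk
    congr 1
    ring
  rcases hc with rfl | rfl
  · exact main ε hε
  · have e : ∀ v ∈ range (2^m), |(-1:ℝ) + ∑ p ∈ range m, ε p * pat v p|
        = |1 + ∑ p ∈ range m, (-ε p) * pat v p| := by
      intro v _
      rw [← abs_neg]
      congr 1
      rw [neg_add, ← Finset.sum_neg_distrib]
      congr 1
      · norm_num
      · exact Finset.sum_congr rfl (fun p _ => by ring)
    rw [Finset.sum_congr rfl e]
    exact main (fun p => -ε p) (fun p => by rcases hε p with h|h <;> simp [h])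

lemma nk1 : ∀ k : ℕ, 4^(2*k) ≤ (4*k+1) * (Nat.centralBinom k)^2 := by
  intro k
  induction k with
  | zero => simp [Nat.centralBinom_zero]
  | succ k ih =>
    have hrec := Nat.succ_mul_centralBinom_succ k
    refine Nat.le_of_mul_le_mul_left ?_ (show 0 < (k+1)^2 by positivity)
    have h2 : 16*(k+1)^2 * 4^(2*k) ≤ 16*(k+1)^2 * ((4*k+1) * (Nat.centralBinom k)^2) :=
      Nat.mul_le_mul_left _ ih
    have hco : 16*(k+1)^2*(4*k+1) ≤ 4*((4*k+5)*(2*k+1)^2) := by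
      calc 16*(k+1)^2*(4*k+1) ≤ 16*(k+1)^2*(4*k+1) + 4 := Nat.le_add_right _ _
        _ = 4*((4*k+5)*(2*k+1)^2) := by ring
    have h3 : 16*(k+1)^2 * ((4*k+1) * (Nat.centralBinom k)^2)
        ≤ 4*((4*k+5)*(2*k+1)^2) * (Nat.centralBinom k)^2 := by
      rw [show 16*(k+1)^2 * ((4*k+1) * (Nat.centralBinom k)^2)
        = (16*(k+1)^2*(4*k+1)) * (Nat.centralBinom k)^2 by ring]
      exact Nat.mul_le_mul_right _ hco
    have h4 : (k+1)^2 * ((4*k+5) * (Nat.centralBinom (k+1))^2)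
        = 4*((4*k+5)*(2*k+1)^2) * (Nat.centralBinom k)^2 := by
      have : (k+1)^2 * ((4*k+5) * (Nat.centralBinom (k+1))^2)
          = (4*k+5) * ((k+1) * Nat.centralBinom (k+1))^2 := by ring
      rw [this, hrec]
      ring
    calc (k+1)^2 * 4^(2*(k+1)) = 16*(k+1)^2 * 4^(2*k) := by ring
      _ ≤ 16*(k+1)^2 * ((4*k+1) * (Nat.centralBinom k)^2) := h2
      _ ≤ 4*((4*k+5)*(2*k+1)^2) * (Nat.centralBinom k)^2 := h3
      _ = (k+1)^2 * ((4*k+5) * (Nat.centralBinom (k+1))^2) := h4.symm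
      _ = (k+1)^2 * ((4*(k+1)+1) * (Nat.centralBinom (k+1))^2) := by ring

lemma nk2 : ∀ k : ℕ, 4^(2*(k+1)) ≤ 4*(k+1) * (Nat.centralBinom (k+1))^2 := by
  intro k
  induction k with
  | zero => decide
  | succ k ih =>
    have hrec := Nat.succ_mul_centralBinom_succ (k+1)
    refine Nat.le_of_mul_le_mul_left ?_ (show 0 < k+2 by omega)
    have h2 : (k+2) * 16 * 4^(2*(k+1)) ≤ (k+2) * 16 * (4*(k+1) * (Nat.centralBinom (k+1))^2) :=
      Nat.mul_le_mul_left _ ih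
    have hco : (k+2)*16*(4*(k+1)) ≤ 16*(2*k+3)^2 := by
      calc (k+2)*16*(4*(k+1)) ≤ (k+2)*16*(4*(k+1)) + 16 := Nat.le_add_right _ _
        _ = 16*(2*k+3)^2 := by ring
    have h3 : (k+2) * 16 * (4*(k+1) * (Nat.centralBinom (k+1))^2)
        ≤ 16*(2*k+3)^2 * (Nat.centralBinom (k+1))^2 := by
      rw [show (k+2) * 16 * (4*(k+1) * (Nat.centralBinom (k+1))^2)
        = ((k+2)*16*(4*(k+1))) * (Nat.centralBinom (k+1))^2 by ring]
      exact Nat.mul_le_mul_right _ hco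
    have h4 : (k+2) * (4*(k+2) * (Nat.centralBinom (k+2))^2)
        = 16*(2*k+3)^2 * (Nat.centralBinom (k+1))^2 := by
      have e : (k+2) * (4*(k+2) * (Nat.centralBinom (k+2))^2)
          = 4 * ((k+2) * Nat.centralBinom (k+2))^2 := by ring
      rw [e, show k+2 = k+1+1 from rfl, hrec]
      ring
    calc (k+2) * 4^(2*(k+1+1)) = (k+2) * 16 * 4^(2*(k+1)) := by ring
      _ ≤ (k+2) * 16 * (4*(k+1) * (Nat.centralBinom (k+1))^2) := h2
      _ ≤ 16*(2*k+3)^2 * (Nat.centralBinom (k+1))^2 := h3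
      _ = (k+2) * (4*(k+1+1) * (Nat.centralBinom (k+1+1))^2) := by rw [h4]

lemma nk (m : ℕ) : 4^m ≤ 2*(m+1) * (Nat.choose m (m/2))^2 := by
  rcases Nat.even_or_odd m with he | ho
  · obtain ⟨r, rfl⟩ := he
    rw [show (r+r)/2 = r from by omega, show Nat.choose (r+r) r = Nat.centralBinom r from by
      rw [Nat.centralBinom, two_mul]]
    calc 4^(r+r) = 4^(2*r) := by rw [two_mul]
      _ ≤ (4*r+1) * (Nat.centralBinom r)^2 := nk1 r
      _ ≤ (2*(r+r+1)) * (Nat.centralBinom r)^2 := Nat.mul_le_mul_right _ (by omega)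
  · obtain ⟨r, rfl⟩ := ho
    rw [show (2*r+1)/2 = r from by omega]
    have hodd : Nat.centralBinom (r+1) = 2 * Nat.choose (2*r+1) r := by
      rw [Nat.centralBinom, show 2*(r+1) = 2*r+2 from by ring]
      exact choose_odd_id r
    refine Nat.le_of_mul_le_mul_left ?_ (show 0 < 4 by omega)
    calc 4 * 4^(2*r+1) = 4^(2*(r+1)) := by ring
      _ ≤ 4*(r+1) * (Nat.centralBinom (r+1))^2 := nk2 r
      _ = 4 * (2*(2*r+1+1) * (Nat.choose (2*r+1) r)^2) := by rw [hodd]; ring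

lemma khinchin_lower (m : ℕ) :
    (2^m : ℝ) * Real.sqrt ((m+1)/2) ≤ (((m+1) * Nat.choose m (m/2) : ℕ) : ℝ) := by
  set X : ℝ := (((m+1) * Nat.choose m (m/2) : ℕ) : ℝ) with hX
  have hXnn : 0 ≤ X := Nat.cast_nonneg _
  have h2m : (0:ℝ) < 2^m := by positivity
  have hnk : (4^m : ℝ) ≤ 2*(m+1) * ((Nat.choose m (m/2) : ℕ):ℝ)^2 := by
    exact_mod_cast nk m
  have hs : Real.sqrt (((m:ℝ)+1)/2) ≤ X / 2^m := by
    rw [show X / 2^m = Real.sqrt ((X/2^m)^2) from (Real.sqrt_sq (by positivity)).symm]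
    apply Real.sqrt_le_sqrt
    rw [div_pow, le_div_iff₀ (by positivity)]
    have h4 : ((2:ℝ)^m)^2 = 4^m := by
      rw [← pow_mul, show (4:ℝ) = 2^2 by norm_num, ← pow_mul, mul_comm]
    rw [h4, hX]
    push_cast
    nlinarith [hnk, sq_nonneg (((Nat.choose m (m/2) : ℕ)):ℝ)]
  calc (2^m : ℝ) * Real.sqrt ((m+1)/2) ≤ (2^m : ℝ) * (X / 2^m) := by
        apply mul_le_mul_of_nonneg_left _ (le_of_lt h2m)
        exact_mod_cast hs
    _ = X := by field_simp

lemma sum_Icc_one_eq (n : ℕ) (g : ℕ → ℝ) :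
    ∑ i ∈ Finset.Icc 1 n, g i = ∑ p ∈ Finset.range n, g (n-p) := by
  apply Finset.sum_nbij' (fun i => n - i) (fun p => n - p)
  · intro a ha; rw [Finset.mem_range]; rw [Finset.mem_Icc] at ha; omega
  · intro a ha; rw [Finset.mem_Icc]; rw [Finset.mem_range] at ha; omega
  · intro a ha; rw [Finset.mem_Icc] at ha; omega
  · intro a ha; rw [Finset.mem_range] at ha; omega
  · intro a ha; rw [Finset.mem_Icc] at ha; congr 1; omega

/-- For every choice of signs `θ_{i,j} = ±1`, the double sign sum satisfies
`‖Σ_{i,j=1}^n θ_{i,j} r_i(s) r_j(t)‖_∞ ≥ (1/√2) n^{3/2}`. -/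
theorem sign_chaos_sup_norm_lower_bound (n : ℕ) (θ : ℕ → ℕ → ℝ)
    (hθ : ∀ i j, θ i j = 1 ∨ θ i j = -1) :
    ENNReal.ofReal ((1 / Real.sqrt 2) * (n : ℝ) ^ ((3:ℝ)/2))
      ≤ eLpNorm (fun p : ℝ × ℝ =>
          ∑ i ∈ Finset.Icc 1 n, ∑ j ∈ Finset.Icc 1 n, θ i j * rad i p.1 * rad j p.2) ⊤ μsq := by
  rcases Nat.eq_zero_or_pos n with rfl | hn
  · simp [Real.zero_rpow (by norm_num : ((3:ℝ)/2) ≠ 0)]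
  set m := n - 1 with hm
  have hnm : n = m + 1 := by omega
  set A : ℕ → ℕ → ℝ := fun j v => ∑ i ∈ Finset.Icc 1 n, θ i j * pat v (n-i) with hA
  -- Khinchin lower bound for each j
  have hKj : ∀ j, (2^m : ℝ) * Real.sqrt ((n:ℝ)/2) ≤ ∑ v ∈ range (2^m), |A j v| := by
    intro j
    have hrw : ∀ v ∈ range (2^m), |A j v|
        = |θ 1 j + ∑ p ∈ range m, θ (n-p) j * pat v p| := by
      intro v hv
      rw [Finset.mem_range] at hv
      have e1 : A j v = ∑ p ∈ range n, θ (n-p) j * pat v (n-(n-p)) := by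
        rw [hA]
        exact sum_Icc_one_eq n _
      have e2 : ∑ p ∈ range n, θ (n-p) j * pat v (n-(n-p))
          = ∑ p ∈ range m, θ (n-p) j * pat v p + θ 1 j := by
        rw [hnm, Finset.sum_range_succ]
        congr 1
        · apply Finset.sum_congr rfl
          intro p hp
          rw [Finset.mem_range] at hp
          congr 2
          omega
        · rw [show m + 1 - m = 1 by omega, show m + 1 - 1 = m by omega,
            pat_of_lt (show v < 2^m from hv)]
          ring
      rw [e1, e2]
      congr 1
      ring
    rw [Finset.sum_congr rfl hrw,
      khinchin_sum m (θ 1 j) (hθ 1 j) (fun p => θ (n-p) j) (fun p => hθ (n-p) j)]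
    have := khinchin_lower m
    have hcast : ((m:ℝ)+1) = (n:ℝ) := by rw [hnm]; push_cast; ring
    rw [hcast] at this
    exact this
  -- sum over j and exchange
  have hsumj : (2^m : ℝ) * ((n:ℝ) * Real.sqrt ((n:ℝ)/2))
      ≤ ∑ v ∈ range (2^m), ∑ j ∈ Finset.Icc 1 n, |A j v| := by
    rw [Finset.sum_comm]
    calc (2^m : ℝ) * ((n:ℝ) * Real.sqrt ((n:ℝ)/2))
        = ∑ _j ∈ Finset.Icc 1 n, (2^m : ℝ) * Real.sqrt ((n:ℝ)/2) := by
          rw [Finset.sum_const, Nat.card_Icc]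
          simp only [nsmul_eq_mul]
          push_cast
          ring
      _ ≤ ∑ j ∈ Finset.Icc 1 n, ∑ v ∈ range (2^m), |A j v| :=
          Finset.sum_le_sum (fun j _ => hKj j)
  -- extract a good v
  obtain ⟨v, hvmem, hvge⟩ := Finset.exists_le_of_sum_le
    (show (range (2^m)).Nonempty from ⟨0, by rw [Finset.mem_range]; positivity⟩)
    (show ∑ _v ∈ range (2^m), ((n:ℝ) * Real.sqrt ((n:ℝ)/2))
        ≤ ∑ v ∈ range (2^m), ∑ j ∈ Finset.Icc 1 n, |A j v| by
      rw [Finset.sum_const, Finset.card_range, nsmul_eq_mul]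
      push_cast
      exact hsumj)
  rw [Finset.mem_range] at hvmem
  -- choose w realizing optimal signs
  set σ : ℝ := if 0 ≤ A 1 v then 1 else -1 with hσdef
  have hσ : σ = 1 ∨ σ = -1 := by rw [hσdef]; split <;> simp
  set d : ℕ → ℝ := fun p => σ * (if 0 ≤ A (n-p) v then 1 else -1) with hd
  have hdpm : ∀ p, d p = 1 ∨ d p = -1 := by
    intro p
    rw [hd]
    simp only
    rcases le_or_gt 0 (A (n-p) v) with h2 | h2
    · rw [if_pos h2]; rcases hσ with h | h <;> rw [h] <;> norm_num
    · rw [if_neg (not_le.2 h2)]; rcases hσ with h | h <;> rw [h] <;> norm_num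
  obtain ⟨w, hw, hw1, hw2⟩ := pat_realize m d hdpm
  have hkey : ∀ j, 1 ≤ j → j ≤ n → pat w (n-j) = σ * (if 0 ≤ A j v then 1 else -1) := by
    intro j h1 h2
    rcases Nat.lt_or_ge 1 j with h | h
    · rw [hw1 (n-j) (by omega), hd]
      simp only
      rw [show n - (n-j) = j by omega]
    · have : j = 1 := by omega
      subst this
      rw [hw2 (n-1) (by omega), hσdef]
      split <;> norm_num
  -- the value on the chosen rectangle
  set X : ℝ := ∑ i ∈ Finset.Icc 1 n, ∑ j ∈ Finset.Icc 1 n, θ i j * pat v (n-i) * pat w (n-j)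
    with hXdef
  have hXa : X = ∑ j ∈ Finset.Icc 1 n, A j v * pat w (n-j) := by
    rw [hXdef, Finset.sum_comm]
    apply Finset.sum_congr rfl
    intro j _
    rw [hA]
    simp only
    rw [Finset.sum_mul]
  have hXval : X = σ * ∑ j ∈ Finset.Icc 1 n, |A j v| := by
    rw [hXa, Finset.mul_sum]
    apply Finset.sum_congr rfl
    intro j hj
    rw [Finset.mem_Icc] at hj
    rw [hkey j hj.1 hj.2]
    rcases le_or_gt 0 (A j v) with h2 | h2
    · rw [if_pos h2, abs_of_nonneg h2]; ring
    · rw [if_neg (not_le.2 h2), abs_of_neg h2]; ring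
  have hXabs : (n:ℝ) * Real.sqrt ((n:ℝ)/2) ≤ |X| := by
    rw [hXval, abs_mul]
    have h1 : |σ| = 1 := by rcases hσ with h | h <;> rw [h] <;> norm_num
    rw [h1, one_mul, abs_of_nonneg (Finset.sum_nonneg (fun j _ => abs_nonneg _))]
    exact hvge
  -- target value
  have htgt : (1 / Real.sqrt 2) * (n : ℝ) ^ ((3:ℝ)/2) = (n:ℝ) * Real.sqrt ((n:ℝ)/2) := by
    have h1 : (n:ℝ) ^ ((3:ℝ)/2) = (n:ℝ) * Real.sqrt n := by
      rw [show ((3:ℝ)/2) = 1 + 1/2 by norm_num,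
        Real.rpow_add (by exact_mod_cast hn : (0:ℝ) < n), Real.rpow_one,
        ← Real.sqrt_eq_rpow]
    rw [h1, Real.sqrt_div (Nat.cast_nonneg n) 2]
    ring
  -- the rectangle
  set a : ℝ := (v:ℝ)/2^m with ha
  set b : ℝ := ((v:ℝ)+1)/2^m with hb
  set c : ℝ := (w:ℝ)/2^m with hc
  set e : ℝ := ((w:ℝ)+1)/2^m with he
  have h2mpos : (0:ℝ) < 2^m := by positivity
  have hfval : ∀ p : ℝ × ℝ, p ∈ Set.Ioo a b ×ˢ Set.Ioo c e →
      (∑ i ∈ Finset.Icc 1 n, ∑ j ∈ Finset.Icc 1 n, θ i j * rad i p.1 * rad j p.2) = X := by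
    intro p hp
    obtain ⟨hp1, hp2⟩ := hp
    rw [hXdef]
    apply Finset.sum_congr rfl
    intro i hi
    rw [Finset.mem_Icc] at hi
    apply Finset.sum_congr rfl
    intro j hj
    rw [Finset.mem_Icc] at hj
    have hrs : rad i p.1 = pat v (n-i) := by
      apply rad_eq_pat hi.1 hi.2 (show v < 2^(n-1) from hvmem)
      rw [show n - 1 = m from rfl]
      exact hp1
    have hrt : rad j p.2 = pat w (n-j) := by
      apply rad_eq_pat hj.1 hj.2 (show w < 2^(n-1) from hw)
      rw [show n - 1 = m from rfl]
      exact hp2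
    rw [hrs, hrt]
  -- measure of the rectangle is positive
  have hsub1 : Set.Ioo a b ⊆ Set.Icc (0:ℝ) 1 := by
    intro x hx
    constructor
    · have : (0:ℝ) ≤ a := by rw [ha]; positivity
      linarith [hx.1]
    · have hble : b ≤ 1 := by
        rw [hb, div_le_one h2mpos]
        have : (v:ℝ) + 1 ≤ (2^m : ℕ) := by exact_mod_cast hvmem
        push_cast at this ⊢
        linarith
      linarith [hx.2]
  have hsub2 : Set.Ioo c e ⊆ Set.Icc (0:ℝ) 1 := by
    intro x hx
    constructor
    · have : (0:ℝ) ≤ c := by rw [hc]; positivity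
      linarith [hx.1]
    · have hele : e ≤ 1 := by
        rw [he, div_le_one h2mpos]
        have : (w:ℝ) + 1 ≤ (2^m : ℕ) := by exact_mod_cast hw
        push_cast at this ⊢
        linarith
      linarith [hx.2]
  have hrectpos : μsq (Set.Ioo a b ×ˢ Set.Ioo c e) ≠ 0 := by
    rw [μsq, Measure.prod_prod, Measure.restrict_apply measurableSet_Ioo,
      Measure.restrict_apply measurableSet_Ioo,
      Set.inter_eq_self_of_subset_left hsub1, Set.inter_eq_self_of_subset_left hsub2,
      Real.volume_Ioo, Real.volume_Ioo]
    have hba : b - a = 1/2^m := by rw [hb, ha]; field_simp; ring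
    have hec : e - c = 1/2^m := by rw [he, hc]; field_simp; ring
    rw [hba, hec]
    simp only [ne_eq, mul_eq_zero, ENNReal.ofReal_eq_zero, not_or, not_le]
    constructor <;> positivity
  -- conclude via essSup
  by_contra hcon
  push_neg at hcon
  rw [eLpNorm_exponent_top] at hcon
  have hae := ae_lt_of_essSup_lt hcon
  rw [ae_iff] at hae
  apply hrectpos
  refine measure_mono_null ?_ hae
  intro p hp
  simp only [Set.mem_setOf_eq, not_lt]
  rw [← ofReal_norm]
  apply ENNReal.ofReal_le_ofReal
  rw [Real.norm_eq_abs, hfval p hp, htgt]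
  exact hXabs
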